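/- Every blocked chain of domino tiles consists of at least 10 tiles. -/

import Mathlib

/-- A domino tile is an unordered pair of values in `{0,…,6}`. -/
abbrev Tile := Sym2 (Fin 7)

/-- The pip sum of the tile `[a,b]` is `a + b`. -/
def pips (t : Tile) : ℕ :=
  Sym2.lift ⟨fun (a b : Fin 7) => (a : ℕ) + (b : ℕ), fun a b => Nat.add_comm a b⟩ t

/-- A chain of domino tiles: a nonempty finite sequence of oriented tiles
`(a₁,b₁),…,(aₙ,bₙ)` whose underlying unordered tiles are pairwise distinct and
which satisfies `bᵢ = aᵢ₊₁` for all `1 ≤ i < n`. -/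
structure DChain where
  tiles : List (Fin 7 × Fin 7)
  ne : tiles ≠ []
  nodup : (tiles.map fun p => Sym2.mk p.1 p.2).Nodup
  linked : tiles.Chain' fun p q => p.2 = q.1

/-- The left end `a₁` of a chain. -/
def DChain.left (C : DChain) : Fin 7 := (C.tiles.head C.ne).1

/-- The right end `bₙ` of a chain. -/
def DChain.right (C : DChain) : Fin 7 := (C.tiles.getLast C.ne).2

/-- The `2n` entries `a₁,b₁,a₂,b₂,…,aₙ,bₙ` of a chain. -/
def DChain.entries (C : DChain) : List (Fin 7) := C.tiles.flatMap fun p => [p.1, p.2]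

/-- The underlying (unordered) tiles of a chain. -/
def DChain.tileList (C : DChain) : List Tile := C.tiles.map fun p => Sym2.mk p.1 p.2

/-- The total pip sum of a chain. -/
def DChain.pipsSum (C : DChain) : ℕ := (C.tiles.map fun p => (p.1 : ℕ) + (p.2 : ℕ)).sum

/-- A chain is blocked if no domino tile outside the chain contains its left end,
and no domino tile outside the chain contains its right end. -/
def DChain.Blocked (C : DChain) : Prop :=
  ∀ t : Tile, t ∉ C.tileList → C.left ∉ t ∧ C.right ∉ t


namespace BlockedAux

/-- number of interior junctions equal to `a` -/
def jc (a : Fin 7) (L : List (Fin 7 × Fin 7)) : ℕ :=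
  L.dropLast.countP (fun p => decide (p.2 = a))

/-- number of occurrences of the double `(a,a)` -/
def dc (a : Fin 7) (L : List (Fin 7 × Fin 7)) : ℕ :=
  L.countP (fun p => decide (p = (a,a)))

lemma jc_cons₂ (a : Fin 7) (p q : Fin 7 × Fin 7) (L : List (Fin 7 × Fin 7)) :
    jc a (p :: q :: L) = (if p.2 = a then 1 else 0) + jc a (q :: L) := by
  simp [jc, List.dropLast, List.countP_cons]
  split <;> omega

lemma dc_cons (a : Fin 7) (p : Fin 7 × Fin 7) (L : List (Fin 7 × Fin 7)) :
    dc a (p :: L) = (if p = (a,a) then 1 else 0) + dc a L := by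
  simp [dc, List.countP_cons]
  split <;> omega

/-- The key inductive estimate. -/
lemma main (a : Fin 7) : ∀ N : ℕ, ∀ L : List (Fin 7 × Fin 7), L.length ≤ N →
    L.Chain' (fun p q => p.2 = q.1) → (L.map fun p => Sym2.mk p.1 p.2).Nodup →
    ∀ (h : L ≠ []), (L.getLast h).2 = a →
    (((L.head h).1 = a → 3 * (jc a L + 1) ≤ L.length + 2 * dc a L) ∧
     ((L.head h).2 = a ∨ 3 * jc a L + 2 ≤ L.length + 2 * dc a L) ∧
     (3 * jc a L + 1 ≤ L.length + 2 * dc a L)) := by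
  intro N
  induction N with
  | zero => intro L hlen _ _ h _; simp [List.length_eq_zero_iff] at hlen; exact absurd hlen h
  | succ N IH =>
    rintro (_ | ⟨p, rest⟩) hlen hch hnd h hlast
    · exact absurd rfl h
    rcases rest with _ | ⟨q, rest'⟩
    · -- singleton
      simp [List.getLast] at hlast
      refine ⟨?_, ?_, ?_⟩
      · intro hp1
        have hpd : p = (a,a) := Prod.ext hp1 hlast
        simp [jc, dc, hpd, List.countP_cons]
      · left; simpa using hlast
      · simp [jc]
    · -- L = p :: q :: rest'
      set tail := q :: rest' with htail
      have htne : tail ≠ [] := by simp [htail]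
      have hchT : tail.Chain' (fun p q => p.2 = q.1) := hch.tail
      have hpq : p.2 = q.1 := (List.isChain_cons_cons.mp hch).1
      have hndT : (tail.map fun p => Sym2.mk p.1 p.2).Nodup := by
        simpa using hnd.of_cons
      have hnotmem : Sym2.mk p.1 p.2 ∉ tail.map fun p => Sym2.mk p.1 p.2 := by
        have := hnd
        rw [List.map_cons, List.nodup_cons] at this
        exact this.1
      have hlastT : (tail.getLast htne).2 = a := by
        rw [← hlast]
        congr 1
      have hlenT : tail.length ≤ N := by
        simp at hlen ⊢; omega
      obtain ⟨IHA, IHB2, IHB1⟩ := IH tail hlenT hchT hndT htne hlastT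
      have hheadT : tail.head htne = q := rfl
      have hjc : jc a (p :: tail) = (if p.2 = a then 1 else 0) + jc a tail := jc_cons₂ a p q rest'
      have hdc : dc a (p :: tail) = (if p = (a,a) then 1 else 0) + dc a tail := dc_cons a p tail
      have hlenL : (p :: tail).length = tail.length + 1 := by simp
      by_cases hpa : p.2 = a
      · -- junction after p equals a
        have hq1 : q.1 = a := by rw [← hpq, hpa]
        have hA' := IHA (by rw [hheadT]; exact hq1)
        refine ⟨?_, ?_, ?_⟩
        · intro hp1
          have hpd : p = (a,a) := Prod.ext hp1 hpa
          rw [hjc, hdc, hlenL]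
          simp [hpa, hpd]
          omega
        · left; simpa using hpa
        · rw [hjc, hdc, hlenL]
          simp [hpa]
          split <;> omega
      · -- junction after p is not a
        have hq1 : q.1 ≠ a := by rw [← hpq]; exact hpa
        have hpd : p ≠ (a,a) := by
          intro hc; rw [hc] at hpa; exact hpa rfl
        have hjc' : jc a (p :: tail) = jc a tail := by rw [hjc]; simp [hpa]
        have hdc' : dc a (p :: tail) = dc a tail := by rw [hdc]; simp [hpd]
        rcases IHB2 with hq2 | hstrong
        · -- q.2 = a
          have hq2' : q.2 = a := by simpa [hheadT] using hq2
          refine ⟨?_, ?_, ?_⟩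
          · intro hp1
            exfalso
            apply hnotmem
            simp only [List.head_cons] at hp1
            have hpeq : p = (q.2, q.1) := Prod.ext (by rw [hp1, hq2']) hpq
            have heq : Sym2.mk p.1 p.2 = Sym2.mk q.1 q.2 := by
              calc Sym2.mk p.1 p.2 = Sym2.mk q.2 q.1 := by rw [hpeq]
                _ = Sym2.mk q.1 q.2 := Sym2.eq_swap
            rw [heq]
            exact List.mem_map_of_mem (f := fun p : Fin 7 × Fin 7 => Sym2.mk p.1 p.2) List.mem_cons_self
          · right; rw [hjc', hdc', hlenL]; omega
          · rw [hjc', hdc', hlenL]; omega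
        · refine ⟨?_, ?_, ?_⟩
          · intro _; rw [hjc', hdc', hlenL]; omega
          · right; rw [hjc', hdc', hlenL]; omega
          · rw [hjc', hdc', hlenL]; omega


lemma countP_pair {α : Type*} (f1 f2 g1 g2 : α → Bool)
    (hpt : ∀ x, (if f1 x then 1 else 0) + (if f2 x then 1 else 0)
      = (if g1 x then 1 else 0) + (if g2 x then 1 else 0)) :
    ∀ L : List α, L.countP f1 + L.countP f2 = L.countP g1 + L.countP g2 := by
  intro L
  induction L with
  | nil => simp
  | cons x L IH =>
    have := hpt x
    simp only [List.countP_cons]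
    split_ifs at this ⊢ <;> omega

lemma pointwise (a : Fin 7) (p : Fin 7 × Fin 7) :
    (if (decide (p.1 = a) : Bool) then 1 else 0) + (if (decide (p.2 = a) : Bool) then 1 else 0)
      = (if (decide (a ∈ Sym2.mk p.1 p.2) : Bool) then 1 else 0)
        + (if (decide (p = (a,a)) : Bool) then 1 else 0) := by
  rcases p with ⟨x, y⟩
  have h1 : (a ∈ s(x,y)) ↔ (x = a ∨ y = a) := by
    rw [Sym2.mem_iff]; exact or_congr eq_comm eq_comm
  by_cases hx : x = a <;> by_cases hy : y = a <;>
    simp [h1, Prod.ext_iff, hx, hy]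

lemma countFst (a : Fin 7) : ∀ (rest : List (Fin 7 × Fin 7)) (p : Fin 7 × Fin 7),
    (p :: rest).Chain' (fun p q => p.2 = q.1) →
    (p :: rest).countP (fun r => decide (r.1 = a))
      = (if p.1 = a then 1 else 0) + jc a (p :: rest) := by
  intro rest
  induction rest with
  | nil => intro p _; simp [List.countP_cons, jc]
  | cons q rest' IH =>
    intro p hch
    have hpq : p.2 = q.1 := (List.isChain_cons_cons.mp hch).1
    have h2 := IH q hch.tail
    rw [jc_cons₂]
    have : (p :: q :: rest').countP (fun r => decide (r.1 = a))
        = (if p.1 = a then 1 else 0) + (q :: rest').countP (fun r => decide (r.1 = a)) := by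
      simp [List.countP_cons]
      ring
    rw [this, h2, hpq]

lemma countSnd (a : Fin 7) (L : List (Fin 7 × Fin 7)) (h : L ≠ []) :
    L.countP (fun r => decide (r.2 = a))
      = jc a L + (if (L.getLast h).2 = a then 1 else 0) := by
  conv_lhs => rw [← List.dropLast_append_getLast h]
  rw [List.countP_append]
  simp [jc, List.countP_cons]

lemma countFst' (a : Fin 7) (L : List (Fin 7 × Fin 7)) (h : L ≠ [])
    (hch : L.Chain' (fun p q => p.2 = q.1)) :
    L.countP (fun r => decide (r.1 = a))
      = (if (L.head h).1 = a then 1 else 0) + jc a L := by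
  cases L with
  | nil => exact absurd rfl h
  | cons p rest => exact countFst a rest p hch

lemma card_seven (a : Fin 7) :
    (Finset.univ.filter (fun t : Sym2 (Fin 7) => a ∈ t)).card = 7 := by
  revert a; decide

end BlockedAux

open BlockedAux in
/-- Every blocked chain of domino tiles consists of at least 10 tiles. -/
theorem blocked_length_ge_ten (C : DChain) (h : C.Blocked) : 10 ≤ C.tiles.length := by
  set a := C.left with ha
  set L := C.tiles with hL
  set M := L.map (fun p => Sym2.mk p.1 p.2) with hM
  have hne : L ≠ [] := C.ne
  have hnd : M.Nodup := C.nodup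
  have hch : L.Chain' (fun p q => p.2 = q.1) := C.linked
  have hmem : ∀ t : Tile, a ∈ t → t ∈ M := by
    intro t ht
    by_contra hn
    exact (h t hn).1 ht
  -- number of tiles in the chain containing `a` is 7
  have hCa : M.countP (fun t => decide (a ∈ t)) = 7 := by
    rw [List.countP_eq_length_filter]
    rw [← List.toFinset_card_of_nodup (hnd.filter _)]
    rw [List.toFinset_filter]
    rw [show M.toFinset.filter (fun t => decide (a ∈ t))
        = Finset.univ.filter (fun t : Sym2 (Fin 7) => a ∈ t) from ?_]
    · exact card_seven a
    · apply Finset.ext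
      intro t
      simp only [Finset.mem_filter, List.mem_toFinset, Finset.mem_univ, true_and,
        decide_eq_true_eq]
      constructor
      · rintro ⟨_, ht⟩; exact ht
      · intro ht; exact ⟨hmem t ht, ht⟩
  have hCa' : L.countP (fun p => decide (a ∈ Sym2.mk p.1 p.2)) = 7 := by
    have h2 := hCa
    rw [hM, List.countP_map] at h2
    exact h2
  -- the double occurs exactly once
  have hdmem : Sym2.mk a a ∈ M := hmem _ (by simp)
  have hdc : dc a L = 1 := by
    have h1 : dc a L = M.countP (fun t => decide (t = Sym2.mk a a)) := by
      rw [hM, List.countP_map]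
      apply List.countP_congr
      intro p _
      rcases p with ⟨x, y⟩
      simp only [Function.comp_apply, decide_eq_true_eq, decide_eq_decide]
      constructor
      · intro he
        rw [Prod.ext_iff] at he
        obtain ⟨h1, h2⟩ := he
        simp only at h1 h2
        rw [h1, h2]
      · intro he
        rcases Sym2.eq_iff.mp he with ⟨rfl, rfl⟩ | ⟨rfl, rfl⟩ <;> rfl
    rw [h1]
    have hcnt : M.count (Sym2.mk a a)
        = M.countP (fun t => decide (t = Sym2.mk a a)) := by
      rw [List.count_eq_countP]
      apply List.countP_congr
      intro x _
      simp [beq_iff_eq]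
    rw [← hcnt]
    exact List.count_eq_one_of_mem hnd hdmem
  -- combine the two occurrence counts
  have hsum := countP_pair (fun r => decide (r.1 = a)) (fun r => decide (r.2 = a))
    (fun p => decide (a ∈ Sym2.mk p.1 p.2)) (fun p => decide (p = (a,a))) (pointwise a) L
  have hS1 := countFst' a L hne hch
  have hS2 := countSnd a L hne
  have hhead : (L.head hne).1 = a := rfl
  rw [hS1, hS2, hCa', hhead, if_pos rfl] at hsum
  have hdc'' : L.countP (fun p => decide (p = (a,a))) = 1 := hdc
  rw [hdc''] at hsum
  -- deduce the right end is `a` and there are exactly 3 interior `a`-junctions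
  have hlast : (L.getLast hne).2 = a := by
    by_contra hc
    rw [if_neg hc] at hsum
    omega
  rw [if_pos hlast] at hsum
  have hj : jc a L = 3 := by omega
  obtain ⟨HA, _, _⟩ := main a L.length L le_rfl hch hnd hne hlast
  have := HA hhead
  rw [hj, hdc] at this
  omega
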